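/- Let b, b' > 0 be given. Then there exists B₀ = B₀(b, b') such that uniformly for X ≥ 1 one has ∑_{n ≤ X, ω(n) > B₀ log log X} b^{ω(n)} = O(X (log 2X)^{−b'}). -/

import Mathlib

open Finset

lemma aux_sum_powerset (t : ℝ) (A : Finset ℕ) :
    ∑ S ∈ A.powerset, t ^ S.card = (t + 1) ^ A.card := by
  have h := Finset.prod_add (fun _ : ℕ => t) (fun _ => (1:ℝ)) A
  simpa using h.symm

lemma aux_prime_count (k : ℕ) :
    (#((Finset.Ioc (2^k) (2^(k+1))).filter Nat.Prime)) * k ≤ 2^(k+2) := by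
  set F := (Finset.Ioc (2^k) (2^(k+1))).filter Nat.Prime with hF
  have h1 : (∏ p ∈ F, p) ∣ primorial (2^(k+1)) := by
    apply Finset.prod_dvd_prod_of_subset
    intro p hp
    simp only [hF, Finset.mem_filter, Finset.mem_Ioc] at hp
    simp [primorial, Finset.mem_filter, Finset.mem_range]
    exact ⟨hp.1.2, hp.2⟩
  have h2 : (2^k) ^ F.card ≤ ∏ p ∈ F, p := by
    apply Finset.pow_card_le_prod
    intro p hp
    simp only [hF, Finset.mem_filter, Finset.mem_Ioc] at hp
    exact hp.1.1.le
  have h3 : (∏ p ∈ F, p) ≤ 4 ^ (2^(k+1)) :=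
    le_trans (Nat.le_of_dvd (primorial_pos _) h1) (primorial_le_4_pow _)
  have h4 : (2:ℕ) ^ (k * F.card) ≤ 2 ^ (2^(k+2)) := by
    calc (2:ℕ) ^ (k * F.card) = (2^k) ^ F.card := by rw [pow_mul]
    _ ≤ 4 ^ (2^(k+1)) := le_trans h2 h3
    _ = 2 ^ (2^(k+2)) := by
        rw [show (4:ℕ) = 2^2 by norm_num, ← pow_mul, pow_succ]
        ring_nf
  have := (Nat.pow_le_pow_iff_right (le_refl 2)).mp h4
  rwa [Nat.mul_comm]

noncomputable def gg : ℕ → ℝ := fun p => if p.Prime then 1 / p else 0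

lemma gg_nonneg (p : ℕ) : 0 ≤ gg p := by
  unfold gg; split <;> positivity

lemma aux_dyadic_sum (k : ℕ) (hk : 1 ≤ k) :
    ∑ p ∈ Finset.Ioc (2^k) (2^(k+1)), gg p ≤ 4 / k := by
  set F := (Finset.Ioc (2^k) (2^(k+1))).filter Nat.Prime with hF
  have h0 : ∑ p ∈ Finset.Ioc (2^k) (2^(k+1)), gg p = ∑ p ∈ F, (1/p : ℝ) := by
    rw [hF, Finset.sum_filter]
    rfl
  rw [h0]
  have h1 : ∑ p ∈ F, (1/p:ℝ) ≤ F.card * ((2:ℝ)^k)⁻¹ := by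
    rw [← nsmul_eq_mul]
    apply Finset.sum_le_card_nsmul
    intro p hp
    simp only [hF, Finset.mem_filter, Finset.mem_Ioc] at hp
    rw [one_div]
    apply inv_anti₀ (by positivity)
    exact_mod_cast hp.1.1.le
  have h2 : (F.card : ℝ) ≤ 2^(k+2) / k := by
    rw [le_div_iff₀ (by positivity)]
    exact_mod_cast aux_prime_count k
  calc ∑ p ∈ F, (1/p:ℝ) ≤ F.card * ((2:ℝ)^k)⁻¹ := h1
    _ ≤ (2^(k+2) / k) * ((2:ℝ)^k)⁻¹ := by
        apply mul_le_mul_of_nonneg_right h2 (by positivity)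
    _ = 4 / k := by
        first
        | (field_simp; ring)
        | field_simp

lemma aux_T (K : ℕ) :
    ∑ p ∈ Finset.Ioc 1 (2^(K+1)), gg p ≤ 1/2 + 4 * ∑ k ∈ Finset.Icc 1 K, (1/k : ℝ) := by
  induction K with
  | zero =>
    simp [show (2:ℕ)^1 = 2 by norm_num, Finset.Ioc_self]
    norm_num [gg, Finset.sum_Ioc_consecutive, show Finset.Ioc 1 2 = {2} by rfl]
  | succ K ih =>
    have hsplit : ∑ p ∈ Finset.Ioc 1 (2^(K+1)), gg p
        + ∑ p ∈ Finset.Ioc (2^(K+1)) (2^(K+2)), gg p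
        = ∑ p ∈ Finset.Ioc 1 (2^(K+2)), gg p := by
      apply Finset.sum_Ioc_consecutive
      · exact Nat.one_le_two_pow
      · exact Nat.pow_le_pow_right (by norm_num) (by omega)
    rw [← hsplit]
    have h2 : ∑ p ∈ Finset.Ioc (2^(K+1)) (2^(K+2)), gg p ≤ 4 / ((K:ℝ)+1) := by
      have := aux_dyadic_sum (K+1) (by omega)
      push_cast at this
      convert this using 3
    have h3 : ∑ k ∈ Finset.Icc 1 (K+1), (1/k : ℝ)
        = ∑ k ∈ Finset.Icc 1 K, (1/k : ℝ) + 1/(K+1) := by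
      rw [← Finset.Ico_add_one_right_eq_Icc, Finset.sum_Ico_succ_top (by omega), Finset.Ico_add_one_right_eq_Icc]
      push_cast
      ring
    rw [h3]
    have h4 : 4 / ((K:ℝ)+1) = 4 * (1/((K:ℝ)+1)) := by ring
    rw [h4] at h2
    linarith

lemma aux_harmonic (m : ℕ) : ∑ k ∈ Finset.Icc 1 m, (1/k : ℝ) ≤ 1 + Real.log m := by
  have h := harmonic_le_one_add_log m
  have e : ((harmonic m : ℚ) : ℝ) = ∑ k ∈ Finset.Icc 1 m, (1/k : ℝ) := by
    rw [harmonic_eq_sum_Icc]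
    push_cast
    simp [one_div]
  rw [← e]
  exact_mod_cast h

lemma mertens_weak (N : ℕ) (hN : 1 ≤ N) :
    ∑ p ∈ (N+1).primesBelow, (1/p : ℝ) ≤ 9 + 4 * Real.log (1 + Real.log N) := by
  set K' := Nat.log 2 N with hK'
  have hlogN : 0 ≤ Real.log N := Real.log_nonneg (by exact_mod_cast hN)
  have h1 : ∑ p ∈ (N+1).primesBelow, (1/p : ℝ) = ∑ p ∈ (N+1).primesBelow, gg p := by
    apply Finset.sum_congr rfl
    intro p hp
    rw [gg, if_pos (Nat.prime_of_mem_primesBelow hp)]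
  have hsub : (N+1).primesBelow ⊆ Finset.Ioc 1 (2^(K'+1)) := by
    intro p hp
    have hp1 := Nat.prime_of_mem_primesBelow hp
    have hp2 := Nat.lt_of_mem_primesBelow hp
    rw [Finset.mem_Ioc]
    constructor
    · exact hp1.one_lt
    · have : N < 2^(K'+1) := Nat.lt_pow_succ_log_self (by norm_num) N
      omega
  have h2 : ∑ p ∈ (N+1).primesBelow, gg p ≤ ∑ p ∈ Finset.Ioc 1 (2^(K'+1)), gg p :=
    Finset.sum_le_sum_of_subset_of_nonneg hsub (fun p _ _ => gg_nonneg p)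
  have h3 := aux_T K'
  have h4 := aux_harmonic K'
  -- bound log K'
  have hlog2 : (1:ℝ)/2 ≤ Real.log 2 := by
    have := Real.log_two_gt_d9
    linarith
  have hK'le : (K' : ℝ) ≤ 2 * Real.log N := by
    have hpow : ((2:ℕ) ^ K' : ℝ) ≤ (N : ℝ) := by
      exact_mod_cast Nat.pow_log_le_self 2 (by omega)
    have := Real.log_le_log (by positivity) hpow
    rw [Real.log_pow] at this
    push_cast at this
    nlinarith
  have h5 : Real.log K' ≤ Real.log 2 + Real.log (1 + Real.log N) := by
    rcases Nat.eq_zero_or_pos K' with h0 | h0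
    · rw [h0]
      simp only [Nat.cast_zero, Real.log_zero]
      have ha := Real.log_nonneg (by linarith : (1:ℝ) ≤ 1 + Real.log N)
      have hb := Real.log_nonneg (by norm_num : (1:ℝ) ≤ 2)
      linarith
    · have : Real.log K' ≤ Real.log (2 * (1 + Real.log N)) := by
        apply Real.log_le_log (by positivity)
        nlinarith
      rwa [Real.log_mul (by norm_num) (by positivity)] at this
  have hlog2' : Real.log 2 ≤ 1 := by
    have := Real.log_two_lt_d9
    linarith
  calc ∑ p ∈ (N+1).primesBelow, (1/p : ℝ)
      ≤ 1/2 + 4 * ∑ k ∈ Finset.Icc 1 K', (1/k : ℝ) := by rw [h1]; linarith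
    _ ≤ 1/2 + 4 * (1 + Real.log K') := by linarith
    _ ≤ 9 + 4 * Real.log (1 + Real.log N) := by linarith

open scoped Classical in
lemma key_sum (t : ℝ) (ht : 0 ≤ t) (N : ℕ) :
    ∑ n ∈ Finset.Icc 1 N, (t+1) ^ n.primeFactors.card
      ≤ (N:ℝ) * ∏ p ∈ (N+1).primesBelow, (t / p + 1) := by
  set P := (N+1).primesBelow with hP
  have hprime : ∀ p ∈ P, p.Prime := fun p hp => Nat.prime_of_mem_primesBelow hp
  have step1 : ∀ n ∈ Finset.Icc 1 N, (t+1) ^ n.primeFactors.card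
      = ∑ S ∈ P.powerset, if S ⊆ n.primeFactors then t ^ S.card else 0 := by
    intro n hn
    rw [Finset.mem_Icc] at hn
    have hsub : n.primeFactors ⊆ P := by
      intro p hp
      rw [Nat.mem_primeFactors] at hp
      rw [hP, Nat.mem_primesBelow]
      exact ⟨Nat.lt_succ_of_le (le_trans (Nat.le_of_dvd (by omega) hp.2.1) hn.2), hp.1⟩
    have hps : P.powerset.filter (fun S => S ⊆ n.primeFactors) = n.primeFactors.powerset := by
      ext S
      simp only [Finset.mem_filter, Finset.mem_powerset]
      exact ⟨fun h => h.2, fun h => ⟨h.trans hsub, h⟩⟩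
    rw [← aux_sum_powerset t n.primeFactors, ← hps, Finset.sum_filter]
  rw [Finset.sum_congr rfl step1, Finset.sum_comm]
  have step3 : ∀ S ∈ P.powerset,
      (∑ n ∈ Finset.Icc 1 N, if S ⊆ n.primeFactors then t ^ S.card else 0)
        = ((N / ∏ p ∈ S, p : ℕ) : ℝ) * t ^ S.card := by
    intro S hS
    rw [Finset.mem_powerset] at hS
    have hfc : (Finset.Icc 1 N).filter (fun n => S ⊆ n.primeFactors)
        = (Finset.Icc 1 N).filter (fun n => (∏ p ∈ S, p) ∣ n) := by
      apply Finset.filter_congr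
      intro n hn
      rw [Finset.mem_Icc] at hn
      constructor
      · intro h
        exact Finset.prod_primes_dvd n
          (fun p hp => Nat.Prime.prime (hprime p (hS hp)))
          (fun p hp => Nat.dvd_of_mem_primeFactors (h hp))
      · intro h p hp
        exact Nat.mem_primeFactors.mpr
          ⟨hprime p (hS hp), dvd_trans (Finset.dvd_prod_of_mem _ hp) h, by omega⟩
    have hcard : ((Finset.Icc 1 N).filter (fun n => (∏ p ∈ S, p) ∣ n)).card
        = N / ∏ p ∈ S, p := by
      rw [show Finset.Icc 1 N = Finset.Ioc 0 N from rfl]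
      exact Nat.Ioc_filter_dvd_card_eq_div N _
    rw [← Finset.sum_filter, Finset.sum_const, hfc, hcard, nsmul_eq_mul]
  rw [Finset.sum_congr rfl step3]
  have step4 : ∀ S ∈ P.powerset,
      ((N / ∏ p ∈ S, p : ℕ) : ℝ) * t ^ S.card ≤ (N:ℝ) * ∏ p ∈ S, (t / p) := by
    intro S hS
    rw [Finset.mem_powerset] at hS
    have hpos : (0:ℝ) < ∏ p ∈ S, (p:ℝ) := by
      apply Finset.prod_pos
      intro p hp
      exact_mod_cast (hprime p (hS hp)).pos
    have h1 : ((N / ∏ p ∈ S, p : ℕ) : ℝ) ≤ (N:ℝ) / ∏ p ∈ S, (p:ℝ) := by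
      have := Nat.cast_div_le (α := ℝ) (m := N) (n := ∏ p ∈ S, p)
      rwa [Nat.cast_prod] at this
    have h2 : ∏ p ∈ S, (t / p) = (N:ℝ)⁻¹ * ((N:ℝ) / ∏ p ∈ S, (p:ℝ)) * t ^ S.card
        ∨ (N:ℕ) = 0 := by
      rcases Nat.eq_zero_or_pos N with h | h
      · right; exact h
      · left
        rw [Finset.prod_div_distrib, Finset.prod_const]
        first
        | (field_simp; ring)
        | field_simp
    rcases h2 with h2 | h2
    · rw [h2]
      rcases Nat.eq_zero_or_pos N with h | h
      · simp [h]
      · have hN0 : (0:ℝ) < N := by exact_mod_cast h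
        rw [show (N:ℝ) * ((N:ℝ)⁻¹ * ((N:ℝ) / ∏ p ∈ S, (p:ℝ)) * t ^ S.card)
            = ((N:ℝ) / ∏ p ∈ S, (p:ℝ)) * t ^ S.card by first | (field_simp; ring) | field_simp]
        exact mul_le_mul_of_nonneg_right h1 (by positivity)
    · simp [h2]
  calc ∑ S ∈ P.powerset, ((N / ∏ p ∈ S, p : ℕ) : ℝ) * t ^ S.card
      ≤ ∑ S ∈ P.powerset, (N:ℝ) * ∏ p ∈ S, (t / p) := Finset.sum_le_sum step4
    _ = (N:ℝ) * ∑ S ∈ P.powerset, ∏ p ∈ S, (t / p) := by rw [Finset.mul_sum]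
    _ = (N:ℝ) * ∏ p ∈ P, (t / p + 1) := by
        rw [Finset.prod_add]
        simp

lemma prod_le_exp (t : ℝ) (ht : 0 ≤ t) (P : Finset ℕ) :
    ∏ p ∈ P, (t / p + 1) ≤ Real.exp (t * ∑ p ∈ P, (1/p : ℝ)) := by
  have step1 : ∏ p ∈ P, (t / p + 1) ≤ ∏ p ∈ P, Real.exp (t / p) := by
    apply Finset.prod_le_prod
    · intro p _; positivity
    · intro p _
      have := Real.add_one_le_exp (t / (p:ℝ))
      linarith
  have step2 : Real.exp (∑ p ∈ P, t / (p:ℝ)) = Real.exp (t * ∑ p ∈ P, (1/p : ℝ)) := by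
    rw [Finset.mul_sum]
    congr 1
    apply Finset.sum_congr rfl
    intro p _
    rw [mul_one_div]
  rw [← step2, Real.exp_sum]
  exact step1

open scoped Classical in
lemma main_sum (t : ℝ) (ht : 0 ≤ t) (N : ℕ) (hN : 1 ≤ N) :
    ∑ n ∈ Finset.Icc 1 N, (t+1) ^ n.primeFactors.card
      ≤ (N:ℝ) * Real.exp (t * (9 + 4 * Real.log (1 + Real.log N))) := by
  have h1 := key_sum t ht N
  have h2 := prod_le_exp t ht ((N+1).primesBelow)
  have h3 := mertens_weak N hN
  have h4 : Real.exp (t * ∑ p ∈ (N+1).primesBelow, (1/p:ℝ))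
      ≤ Real.exp (t * (9 + 4 * Real.log (1 + Real.log N))) := by
    apply Real.exp_le_exp.mpr
    exact mul_le_mul_of_nonneg_left h3 ht
  have hN0 : (0:ℝ) ≤ N := by positivity
  calc ∑ n ∈ Finset.Icc 1 N, (t+1) ^ n.primeFactors.card
      ≤ (N:ℝ) * ∏ p ∈ (N+1).primesBelow, (t / p + 1) := h1
    _ ≤ (N:ℝ) * Real.exp (t * (9 + 4 * Real.log (1 + Real.log N))) := by
      apply mul_le_mul_of_nonneg_left _ hN0
      exact le_trans h2 h4

lemma exp_exp_lt_16 : Real.exp (Real.exp 1) < 16 := by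
  have h1 : Real.exp 1 < 2.7182818286 := Real.exp_one_lt_d9
  have h2 : (0.6931471803 : ℝ) < Real.log 2 := Real.log_two_gt_d9
  have h3 : Real.exp (Real.exp 1) < Real.exp (4 * Real.log 2) := by
    apply Real.exp_lt_exp.mpr
    linarith
  have h4 : Real.exp (4 * Real.log 2) = 16 := by
    rw [show (4:ℝ) * Real.log 2 = Real.log 2 + Real.log 2 + Real.log 2 + Real.log 2 by ring]
    rw [Real.exp_add, Real.exp_add, Real.exp_add, Real.exp_log (by norm_num)]
    norm_num
  linarith

lemma omega_le_self (n : ℕ) : n.primeFactors.card ≤ n := by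
  rcases Nat.eq_zero_or_pos n with h | h
  · simp [h]
  have hsub : n.primeFactors ⊆ Finset.Icc 1 n := by
    intro p hp
    rw [Nat.mem_primeFactors] at hp
    rw [Finset.mem_Icc]
    exact ⟨hp.1.one_lt.le.trans' (by norm_num), Nat.le_of_dvd h hp.2.1⟩
  have := Finset.card_le_card hsub
  simpa [Nat.card_Icc] using this
set_option maxHeartbeats 1000000 in
open scoped Classical in
/-- For `b, b' > 0` there exists `B₀ = B₀(b, b')` such that uniformly for `X ≥ 1`,
`∑_{n ≤ X, ω(n) > B₀ log log X} b^{ω(n)} = O(X (log 2X)^{-b'})`, where `ω(n)` is the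
number of distinct prime factors of `n`. -/
theorem sum_pow_omega_many_prime_factors_le (b b' : ℝ) (hb : 0 < b) (hb' : 0 < b') :
    ∃ B₀ : ℝ, ∃ C : ℝ, 0 < C ∧ ∀ X : ℝ, 1 ≤ X →
      ∑ n ∈ (Finset.Icc 1 ⌊X⌋₊).filter
          (fun n => B₀ * Real.log (Real.log X) < (n.primeFactors.card : ℝ)),
        b ^ n.primeFactors.card
        ≤ C * X * Real.log (2 * X) ^ (-b') := by
  have hexp2 : (2:ℝ) ≤ Real.exp 1 := by
    have := Real.add_one_le_exp (1:ℝ); linarith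
  set B : ℝ := max b 1 with hBdef
  have hB1 : 1 ≤ B := le_max_right _ _
  have hbB : b ≤ B := le_max_left _ _
  set u : ℝ := Real.exp 1 * B with hudef
  have hu1 : 1 ≤ u := by nlinarith
  set t : ℝ := u - 1 with htdef
  have ht : 0 ≤ t := by simp only [htdef]; linarith
  have htu : t + 1 = u := by ring
  set r : ℝ := Real.log (2 * Real.exp (Real.exp 1)) with hrdef
  have hr : 0 < r := by
    rw [hrdef]
    apply Real.log_pos
    nlinarith [Real.exp_pos (Real.exp 1), Real.add_one_le_exp (Real.exp 1)]
  set C₁ : ℝ := Real.exp (9*u + 4*u*Real.log 2 + b'*Real.log 2) with hC1def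
  set C₂ : ℝ := 15 * B^15 * r ^ (b' : ℝ) with hC2def
  have hC1 : 0 < C₁ := Real.exp_pos _
  have hCB : (0:ℝ) < B ^ 15 := by positivity
  have hC2 : 0 < C₂ := by
    have := Real.rpow_pos_of_pos hr b'
    rw [hC2def]; positivity
  refine ⟨4*u + b', C₁ + C₂, by linarith, ?_⟩
  intro X hX
  have hX0 : (0:ℝ) < X := by linarith
  set N : ℕ := ⌊X⌋₊ with hNdef
  have hN1 : 1 ≤ N := Nat.le_floor (by exact_mod_cast hX)
  have hNX : (N:ℝ) ≤ X := Nat.floor_le (by linarith)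
  have hNR : (1:ℝ) ≤ (N:ℝ) := by exact_mod_cast hN1
  set LL : ℝ := Real.log (Real.log X) with hLLdef
  set B₀ : ℝ := 4*u + b' with hB0def
  -- log (2X) is positive
  have hlog2X : 0 < Real.log (2 * X) := Real.log_pos (by linarith)
  have hrpow2X : Real.log (2 * X) ^ (-b') = Real.exp (-b' * Real.log (Real.log (2*X))) := by
    rw [Real.rpow_def_of_pos hlog2X (-b'), mul_comm]
  have hrpow_pos : 0 < Real.log (2 * X) ^ (-b') := Real.rpow_pos_of_pos hlog2X _
  rcases lt_or_ge X (Real.exp (Real.exp 1)) with hXe | hXe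
  · -- small case
    have hN15 : N ≤ 15 := by
      have h16 : X < 16 := lt_trans hXe exp_exp_lt_16
      have h17 : N < 16 := by
        rw [hNdef]
        exact (Nat.floor_lt hX0.le).mpr (by exact_mod_cast h16)
      omega
    have hstep : ∑ n ∈ (Finset.Icc 1 N).filter
          (fun n => B₀ * LL < (n.primeFactors.card : ℝ)),
        b ^ n.primeFactors.card ≤ 15 * B^15 := by
      calc ∑ n ∈ (Finset.Icc 1 N).filter
            (fun n => B₀ * LL < (n.primeFactors.card : ℝ)), b ^ n.primeFactors.card
          ≤ ∑ n ∈ Finset.Icc 1 N, B ^ 15 := by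
            apply Finset.sum_le_sum_of_subset_of_nonneg (Finset.filter_subset _ _)
              (fun n _ _ => by positivity) |>.trans
            apply Finset.sum_le_sum
            intro n hn
            rw [Finset.mem_Icc] at hn
            have h1 : b ^ n.primeFactors.card ≤ B ^ n.primeFactors.card :=
              pow_le_pow_left₀ hb.le hbB _
            have h2 : B ^ n.primeFactors.card ≤ B ^ 15 :=
              pow_le_pow_right₀ hB1 (le_trans (omega_le_self n) (le_trans hn.2 hN15))
            linarith
        _ = (N:ℝ) * B ^ 15 := by
            rw [Finset.sum_const, Nat.card_Icc, Nat.add_sub_cancel, nsmul_eq_mul]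
        _ ≤ 15 * B^15 := by
            have : (N:ℝ) ≤ 15 := by exact_mod_cast hN15
            nlinarith
    -- now RHS lower bound
    have hle2X : Real.log (2*X) ≤ r := by
      rw [hrdef]
      apply Real.log_le_log (by linarith)
      have := Real.exp_pos (Real.exp 1)
      nlinarith
    have hmono : r ^ (-b') ≤ Real.log (2 * X) ^ (-b') := by
      rw [hrpow2X, Real.rpow_def_of_pos hr]
      apply Real.exp_le_exp.mpr
      have := Real.log_le_log hlog2X hle2X
      nlinarith
    have hrr : r ^ (b':ℝ) * r ^ (-b') = 1 := by
      rw [← Real.rpow_add hr]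
      simp
    calc ∑ n ∈ (Finset.Icc 1 N).filter
          (fun n => B₀ * LL < (n.primeFactors.card : ℝ)), b ^ n.primeFactors.card
        ≤ 15 * B^15 := hstep
      _ = C₂ * r ^ (-b') := by rw [hC2def]; rw [mul_assoc, hrr, mul_one]
      _ ≤ C₂ * Real.log (2 * X) ^ (-b') := by
          apply mul_le_mul_of_nonneg_left hmono hC2.le
      _ ≤ C₂ * (X * Real.log (2 * X) ^ (-b')) := by
          apply mul_le_mul_of_nonneg_left _ hC2.le
          nlinarith
      _ ≤ (C₁ + C₂) * X * Real.log (2 * X) ^ (-b') := by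
          have h0 : 0 < X * Real.log (2 * X) ^ (-b') := by positivity
          nlinarith
  · -- big case
    have hlogX : Real.exp 1 ≤ Real.log X := by
      rw [← Real.log_exp (Real.exp 1)]
      exact Real.log_le_log (Real.exp_pos _) hXe
    have hlogX1 : 1 ≤ Real.log X := by linarith
    have hLL0 : 0 ≤ LL := Real.log_nonneg hlogX1
    -- pointwise bound
    have hpt : ∀ n ∈ (Finset.Icc 1 N).filter
          (fun n => B₀ * LL < (n.primeFactors.card : ℝ)),
        b ^ n.primeFactors.card ≤ Real.exp (-(B₀ * LL)) * u ^ n.primeFactors.card := by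
      intro n hn
      rw [Finset.mem_filter] at hn
      set m := n.primeFactors.card with hm
      have h1 : b ^ m ≤ B ^ m := pow_le_pow_left₀ hb.le hbB _
      have h2 : u ^ m = Real.exp m * B ^ m := by
        rw [hudef, mul_pow, ← Real.exp_one_rpow (m:ℝ)]
        rw [← Real.rpow_natCast (Real.exp 1) m]
      have h3 : B ^ m = Real.exp (-(m:ℝ)) * u ^ m := by
        rw [h2, ← mul_assoc, ← Real.exp_add]
        simp
      have h4 : Real.exp (-(m:ℝ)) ≤ Real.exp (-(B₀ * LL)) :=
        Real.exp_le_exp.mpr (by linarith [hn.2])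
      have h5 : (0:ℝ) ≤ u ^ m := by positivity
      calc b ^ m ≤ B ^ m := h1
        _ = Real.exp (-(m:ℝ)) * u ^ m := h3
        _ ≤ Real.exp (-(B₀ * LL)) * u ^ m := mul_le_mul_of_nonneg_right h4 h5
    have hsum1 : ∑ n ∈ (Finset.Icc 1 N).filter
          (fun n => B₀ * LL < (n.primeFactors.card : ℝ)),
        b ^ n.primeFactors.card
        ≤ Real.exp (-(B₀ * LL)) * ∑ n ∈ Finset.Icc 1 N, u ^ n.primeFactors.card := by
      calc ∑ n ∈ (Finset.Icc 1 N).filter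
            (fun n => B₀ * LL < (n.primeFactors.card : ℝ)), b ^ n.primeFactors.card
          ≤ ∑ n ∈ (Finset.Icc 1 N).filter
            (fun n => B₀ * LL < (n.primeFactors.card : ℝ)),
              Real.exp (-(B₀ * LL)) * u ^ n.primeFactors.card := Finset.sum_le_sum hpt
        _ ≤ ∑ n ∈ Finset.Icc 1 N, Real.exp (-(B₀ * LL)) * u ^ n.primeFactors.card := by
            apply Finset.sum_le_sum_of_subset_of_nonneg (Finset.filter_subset _ _)
            intro n _ _
            positivity
        _ = Real.exp (-(B₀ * LL)) * ∑ n ∈ Finset.Icc 1 N, u ^ n.primeFactors.card := by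
            rw [Finset.mul_sum]
    have hsum2 : ∑ n ∈ Finset.Icc 1 N, u ^ n.primeFactors.card
        ≤ (N:ℝ) * Real.exp (t * (9 + 4 * Real.log (1 + Real.log N))) := by
      have := main_sum t ht N hN1
      rwa [htu] at this
    -- exponent comparisons
    have hlogN : Real.log N ≤ Real.log X := Real.log_le_log (by linarith) hNX
    have hlogN0 : 0 ≤ Real.log N := Real.log_nonneg hNR
    have hexp1 : t * (9 + 4 * Real.log (1 + Real.log N))
        ≤ u * (9 + 4 * Real.log (1 + Real.log X)) := by
      have hmono : Real.log (1 + Real.log N) ≤ Real.log (1 + Real.log X) :=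
        Real.log_le_log (by linarith) (by linarith)
      have hnn : 0 ≤ Real.log (1 + Real.log N) := Real.log_nonneg (by linarith)
      have htu' : t ≤ u := by linarith
      nlinarith
    have hexp2' : Real.log (1 + Real.log X) ≤ Real.log 2 + LL := by
      have h1 : 1 + Real.log X ≤ 2 * Real.log X := by linarith
      have h2 : Real.log (1 + Real.log X) ≤ Real.log (2 * Real.log X) :=
        Real.log_le_log (by linarith) h1
      rwa [Real.log_mul (by norm_num) (by linarith)] at h2
    have hexp3 : Real.log (Real.log (2*X)) ≤ Real.log 2 + LL := by
      have h1 : Real.log (2*X) ≤ 2 * Real.log X := by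
        rw [Real.log_mul (by norm_num) (by linarith)]
        have := Real.log_le_log hX0 (le_refl X)
        have hl2 : Real.log 2 ≤ Real.log X := Real.log_le_log (by norm_num)
          (by nlinarith [Real.add_one_le_exp (Real.exp 1)])
        linarith
      have h2 : Real.log (Real.log (2*X)) ≤ Real.log (2 * Real.log X) :=
        Real.log_le_log hlog2X h1
      have h3 : Real.log (2 * Real.log X) = Real.log 2 + LL := by
        rw [Real.log_mul (by norm_num) (by linarith), hLLdef]
      linarith
    -- final chain
    have hfinal : Real.exp (-(B₀ * LL)) * ((N:ℝ) * Real.exp (t * (9 + 4 * Real.log (1 + Real.log N))))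
        ≤ C₁ * X * Real.log (2 * X) ^ (-b') := by
      rw [hrpow2X]
      have hq : Real.exp (-(B₀ * LL)) * Real.exp (t * (9 + 4 * Real.log (1 + Real.log N)))
          ≤ C₁ * Real.exp (-b' * Real.log (Real.log (2*X))) := by
        rw [← Real.exp_add, hC1def, ← Real.exp_add]
        apply Real.exp_le_exp.mpr
        have e1 : t * (9 + 4 * Real.log (1 + Real.log N)) ≤ 9*u + 4*u*Real.log 2 + 4*u*LL := by
          have : u * (9 + 4 * Real.log (1 + Real.log X)) ≤ 9*u + 4*u*Real.log 2 + 4*u*LL := by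
            nlinarith [hexp2']
          linarith [hexp1]
        have e2 : -b' * LL ≤ b' * Real.log 2 + -b' * Real.log (Real.log (2*X)) := by
          nlinarith [hexp3]
        rw [hB0def]
        nlinarith
      calc Real.exp (-(B₀ * LL)) * ((N:ℝ) * Real.exp (t * (9 + 4 * Real.log (1 + Real.log N))))
          ≤ Real.exp (-(B₀ * LL)) * (X * Real.exp (t * (9 + 4 * Real.log (1 + Real.log N)))) := by
            apply mul_le_mul_of_nonneg_left _ (Real.exp_pos _).le
            apply mul_le_mul_of_nonneg_right hNX (Real.exp_pos _).le
        _ = X * (Real.exp (-(B₀ * LL)) * Real.exp (t * (9 + 4 * Real.log (1 + Real.log N)))) := by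
            ring
        _ ≤ X * (C₁ * Real.exp (-b' * Real.log (Real.log (2*X)))) :=
            mul_le_mul_of_nonneg_left hq hX0.le
        _ = C₁ * X * Real.exp (-b' * Real.log (Real.log (2*X))) := by ring
    have hmain : ∑ n ∈ (Finset.Icc 1 N).filter
          (fun n => B₀ * LL < (n.primeFactors.card : ℝ)),
        b ^ n.primeFactors.card ≤ C₁ * X * Real.log (2 * X) ^ (-b') := by
      calc ∑ n ∈ (Finset.Icc 1 N).filter
            (fun n => B₀ * LL < (n.primeFactors.card : ℝ)), b ^ n.primeFactors.card
          ≤ Real.exp (-(B₀ * LL)) * ∑ n ∈ Finset.Icc 1 N, u ^ n.primeFactors.card := hsum1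
        _ ≤ Real.exp (-(B₀ * LL)) * ((N:ℝ) * Real.exp (t * (9 + 4 * Real.log (1 + Real.log N)))) :=
            mul_le_mul_of_nonneg_left hsum2 (Real.exp_pos _).le
        _ ≤ C₁ * X * Real.log (2 * X) ^ (-b') := hfinal
    have h0 : 0 < X * Real.log (2 * X) ^ (-b') := by positivity
    calc ∑ n ∈ (Finset.Icc 1 N).filter
          (fun n => B₀ * LL < (n.primeFactors.card : ℝ)), b ^ n.primeFactors.card
        ≤ C₁ * X * Real.log (2 * X) ^ (-b') := hmain
      _ ≤ (C₁ + C₂) * X * Real.log (2 * X) ^ (-b') := by nlinarith
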